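/- Let ρ be an n×n complex positive semidefinite Hermitian matrix with trace 1, and let D be an n×n Hermitian matrix. Suppose O₀ is an n×n Hermitian matrix with tr(DO₀) = 1 that minimizes tr(ρO²) over all Hermitian O with tr(DO) = 1, i.e. tr(ρO₀²) ≤ tr(ρO²) for all such O. Then there exists a real number λ such that ρO₀ + O₀ρ = λD. -/

import Mathlib

open scoped ComplexOrder
open Matrix

private lemma sld_quad_aux (c d : ℝ) (hd : 0 ≤ d) (h : ∀ t : ℝ, 0 ≤ c * t + d * t ^ 2) :
    c = 0 := by
  by_contra hc
  have hd1 : (0:ℝ) < d + 1 := by linarith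
  have h1 := h (-(c / (2 * (d + 1))))
  have key : c * (-(c / (2 * (d + 1)))) + d * (-(c / (2 * (d + 1)))) ^ 2
      = (c ^ 2 / (4 * (d + 1) ^ 2)) * (d - 2 * (d + 1)) := by
    field_simp; ring
  have hc2 : 0 < c ^ 2 := by positivity
  have hpos : 0 < c ^ 2 / (4 * (d + 1) ^ 2) := by positivity
  nlinarith [key, h1]

private lemma sld_trace_re_eq {n : ℕ} (M : Matrix (Fin n) (Fin n) ℂ) :
    (Mᴴ * M).trace.re = ∑ i, ∑ j, Complex.normSq (M j i) := by
  have hz : ∀ z : ℂ, ((starRingEnd ℂ) z * z).re = Complex.normSq z := by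
    intro z; simp [Complex.mul_re, Complex.normSq_apply]
  simp [Matrix.trace, Matrix.diag, Matrix.mul_apply, Matrix.conjTranspose_apply,
    Complex.re_sum, hz]

private lemma sld_trace_re_nonneg {n : ℕ} (M : Matrix (Fin n) (Fin n) ℂ) :
    0 ≤ (Mᴴ * M).trace.re := by
  rw [sld_trace_re_eq]
  exact Finset.sum_nonneg fun i _ => Finset.sum_nonneg fun j _ => Complex.normSq_nonneg _

private lemma sld_eq_zero {n : ℕ} (M : Matrix (Fin n) (Fin n) ℂ)
    (h : (Mᴴ * M).trace.re = 0) : M = 0 := by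
  rw [sld_trace_re_eq] at h
  ext j i
  have h1 : ∀ i ∈ Finset.univ (α := Fin n), 0 ≤ ∑ j, Complex.normSq (M j i) := by
    intro i _; exact Finset.sum_nonneg fun j _ => Complex.normSq_nonneg _
  have h2 := (Finset.sum_eq_zero_iff_of_nonneg h1).mp h i (Finset.mem_univ i)
  have h3 : ∀ j ∈ Finset.univ (α := Fin n), 0 ≤ Complex.normSq (M j i) := by
    intro j _; exact Complex.normSq_nonneg _
  have h4 := (Finset.sum_eq_zero_iff_of_nonneg h3).mp h2 j (Finset.mem_univ j)
  simpa using Complex.normSq_eq_zero.mp h4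

private lemma sld_trace_pos {n : ℕ} (M : Matrix (Fin n) (Fin n) ℂ) (hM : M ≠ 0) :
    0 < (Mᴴ * M).trace.re := by
  rcases lt_or_eq_of_le (sld_trace_re_nonneg M) with h | h
  · exact h
  · exact absurd (sld_eq_zero M h.symm) hM

private lemma sld_herm_trace_real {n : ℕ} {A B : Matrix (Fin n) (Fin n) ℂ}
    (hA : A.IsHermitian) (hB : B.IsHermitian) : ((A * B).trace).im = 0 := by
  have h1 : star ((A * B).trace) = (A * B).trace := by
    rw [← Matrix.trace_conjTranspose, Matrix.conjTranspose_mul, hA.eq, hB.eq,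
      Matrix.trace_mul_comm]
  have := congrArg Complex.im h1
  simp at this
  linarith

private lemma sld_psd_trace_re_nonneg {n : ℕ} {M : Matrix (Fin n) (Fin n) ℂ}
    (hM : M.PosSemidef) : 0 ≤ M.trace.re := by
  have h : ∀ i, 0 ≤ (M i i).re := by
    intro i
    have h0 := hM.dotProduct_mulVec_nonneg (Pi.single i 1)
    have h2 : star (Pi.single i 1 : Fin n → ℂ) ⬝ᵥ M *ᵥ Pi.single i 1 = M i i := by
      simp [Matrix.mulVec, dotProduct, Pi.single_apply, apply_ite]
    rw [h2] at h0
    exact (Complex.le_def.mp h0).1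
  rw [Matrix.trace]
  rw [Complex.re_sum]
  exact Finset.sum_nonneg fun i _ => h i

/-- Lagrange-multiplier stationarity: a Hermitian `O₀` with `tr(D O₀) = 1` minimizing
`tr(ρ O²)` over all Hermitian `O` with `tr(D O) = 1` satisfies `ρO₀ + O₀ρ = λ D`
for some real `λ`. -/
theorem minimizer_satisfies_sld_equation {n : ℕ} (ρ D O₀ : Matrix (Fin n) (Fin n) ℂ)
    (hρ : ρ.PosSemidef) (hρtr : ρ.trace = 1) (hD : D.IsHermitian)
    (hO₀ : O₀.IsHermitian) (hO₀c : (D * O₀).trace = 1)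
    (hmin : ∀ O : Matrix (Fin n) (Fin n) ℂ, O.IsHermitian → (D * O).trace = 1 →
      (ρ * O₀ ^ 2).trace.re ≤ (ρ * O ^ 2).trace.re) :
    ∃ l : ℝ, ρ * O₀ + O₀ * ρ = (l : ℂ) • D := by
  set S := ρ * O₀ + O₀ * ρ with hSdef
  have hρh : ρ.IsHermitian := hρ.1
  have hS : S.IsHermitian := by
    unfold Matrix.IsHermitian
    rw [hSdef, Matrix.conjTranspose_add, Matrix.conjTranspose_mul, Matrix.conjTranspose_mul,
      hρh.eq, hO₀.eq]
    exact add_comm _ _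
  have key : ∀ H : Matrix (Fin n) (Fin n) ℂ, H.IsHermitian → (D * H).trace = 0 →
      (S * H).trace = 0 := by
    intro H hH hDH
    have hd : 0 ≤ (ρ * H ^ 2).trace.re := by
      have h1 : (ρ * H ^ 2).trace = (Hᴴ * ρ * H).trace := by
        rw [hH.eq, sq, ← Matrix.mul_assoc, Matrix.trace_mul_cycle]
      rw [h1]
      exact sld_psd_trace_re_nonneg (hρ.conjTranspose_mul_mul_same H)
    have hquad : ∀ t : ℝ, 0 ≤ ((S * H).trace).re * t + (ρ * H ^ 2).trace.re * t ^ 2 := by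
      intro t
      set O := O₀ + (t : ℂ) • H with hO
      have hOh : O.IsHermitian := by
        unfold Matrix.IsHermitian
        rw [hO, Matrix.conjTranspose_add, Matrix.conjTranspose_smul, hO₀.eq, hH.eq]
        simp
      have hOc : (D * O).trace = 1 := by
        rw [hO, Matrix.mul_add, Matrix.trace_add, hO₀c, Matrix.mul_smul,
          Matrix.trace_smul, hDH]
        simp
      have hsq : O ^ 2 = O₀ ^ 2 + (t : ℂ) • (O₀ * H + H * O₀) + ((t : ℂ) ^ 2) • H ^ 2 := by
        rw [hO]
        simp only [sq, Matrix.add_mul, Matrix.mul_add, Matrix.smul_mul, Matrix.mul_smul,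
          smul_smul, smul_add, pow_two]
        abel
      have hexp : (ρ * O ^ 2).trace
          = (ρ * O₀ ^ 2).trace + (t : ℂ) * (S * H).trace + (t : ℂ) ^ 2 * (ρ * H ^ 2).trace := by
        rw [hsq]
        simp only [Matrix.mul_add, Matrix.trace_add, Matrix.mul_smul, Matrix.trace_smul]
        have e2 : (ρ * (H * O₀)).trace = (O₀ * ρ * H).trace := by
          rw [← Matrix.mul_assoc, Matrix.trace_mul_cycle]
        have hcyc : (ρ * (O₀ * H)).trace + (ρ * (H * O₀)).trace = (S * H).trace := by
          rw [e2, hSdef, Matrix.add_mul, Matrix.trace_add, ← Matrix.mul_assoc]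
        rw [hcyc]
        simp [smul_eq_mul]
      have hm := hmin O hOh hOc
      rw [hexp] at hm
      simp only [Complex.add_re, Complex.re_ofReal_mul] at hm
      have ht2 : (((t:ℂ))^2 * (ρ * H ^ 2).trace).re = t ^ 2 * (ρ * H ^ 2).trace.re := by
        rw [← Complex.ofReal_pow, Complex.re_ofReal_mul]
      rw [ht2] at hm
      linarith
    have hre : ((S * H).trace).re = 0 := sld_quad_aux _ _ hd hquad
    have him := sld_herm_trace_real hS hH
    exact Complex.ext hre him
  have hDne : D ≠ 0 := by
    intro h
    rw [h] at hO₀c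
    simp at hO₀c
  have hDD : 0 < (D * D).trace.re := by
    have := sld_trace_pos D hDne
    rwa [hD.eq] at this
  set l := (D * S).trace.re / (D * D).trace.re with hl
  refine ⟨l, ?_⟩
  set H := S - (l : ℂ) • D with hHdef
  have hH : H.IsHermitian := by
    unfold Matrix.IsHermitian
    rw [hHdef, Matrix.conjTranspose_sub, Matrix.conjTranspose_smul, hS.eq, hD.eq]
    simp
  have hDS_real : (D * S).trace = ((D * S).trace.re : ℂ) :=
    Complex.ext (by simp) (by simp [sld_herm_trace_real hD hS])
  have hDD_real : (D * D).trace = ((D * D).trace.re : ℂ) :=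
    Complex.ext (by simp) (by simp [sld_herm_trace_real hD hD])
  have hDH : (D * H).trace = 0 := by
    rw [hHdef, Matrix.mul_sub, Matrix.trace_sub, Matrix.mul_smul, Matrix.trace_smul,
      hDS_real, hDD_real, hl, smul_eq_mul]
    push_cast
    rw [div_mul_cancel₀]
    · ring
    · exact_mod_cast hDD.ne'
  have hSH := key H hH hDH
  have hHH : (H * H).trace = 0 := by
    have hSsplit : S = (l : ℂ) • D + H := by rw [hHdef]; abel
    have hexpand : (S * H).trace = (l : ℂ) * (D * H).trace + (H * H).trace := by
      conv_lhs => rw [hSsplit]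
      rw [Matrix.add_mul, Matrix.trace_add, Matrix.smul_mul, Matrix.trace_smul, smul_eq_mul]
    rw [hSH, hDH] at hexpand
    simpa using hexpand.symm
  have hH0 : H = 0 := by
    apply sld_eq_zero
    rw [hH.eq, hHH]
    simp
  have : S - (l : ℂ) • D = 0 := by rw [← hHdef]; exact hH0
  calc ρ * O₀ + O₀ * ρ = S := by rw [hSdef]
    _ = (l : ℂ) • D := by rwa [sub_eq_zero] at this
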